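/- The Hasse diagram of the Tamari poset on planar binary trees of degree n is a regular graph of degree n−1: each tree of degree n is involved in exactly n−1 covering relations (as lower or upper element). -/

import Mathlib

/-- Planar binary trees: a leaf `∘` or an ordered pair of planar binary trees. -/
inductive PBT : Type
  | leaf : PBT
  | node : PBT → PBT → PBT
deriving DecidableEq

namespace PBT

/-- The degree: the number of internal vertices. -/
def deg : PBT → ℕ
  | leaf => 0
  | node l r => deg l + deg r + 1

/-- The over product `x/y`: graft the root of `x` onto the leftmost leaf of `y`. -/
def overProd (x : PBT) : PBT → PBT
  | leaf => x
  | node l r => node (overProd x l) r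

/-- The under product `x\y`: graft the root of `y` onto the rightmost leaf of `x`. -/
def under : PBT → PBT → PBT
  | leaf, y => y
  | node l r, y => node l (under r y)

/-- Left-right reversal: swap the two subtrees at every internal vertex. -/
def rev : PBT → PBT
  | leaf => leaf
  | node l r => node (rev r) (rev l)

/-- `move x y` : `y` is obtained from `x` by one elementary Tamari move,
replacing a subtree `(a (b c))` by `((a b) c)` (a right rotation, going down). -/
inductive move : PBT → PBT → Prop
  | rot (a b c : PBT) : move (node a (node b c)) (node (node a b) c)
  | left {a a' : PBT} (b : PBT) : move a a' → move (node a b) (node a' b)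
  | right (a : PBT) {b b' : PBT} : move b b' → move (node a b) (node a b')

/-- The Tamari order: `x ≤ y` iff `x` is obtained from `y` by a sequence of
elementary moves. -/
def tle (x y : PBT) : Prop := Relation.ReflTransGen move y x

/-- The left comb of degree `n`. -/
def leftComb : ℕ → PBT
  | 0 => leaf
  | n+1 => node (leftComb n) leaf

/-- The right comb of degree `n`. -/
def rightComb : ℕ → PBT
  | 0 => leaf
  | n+1 => node leaf (rightComb n)

end PBT

namespace PBT

/-- The single "up" rotation at the root, if any. -/
def rootUp (l r : PBT) : List PBT :=
  match l with | leaf => [] | node a b => [node a (node b r)]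

/-- The single "down" rotation at the root, if any. -/
def rootDown (l r : PBT) : List PBT :=
  match r with | leaf => [] | node b c => [node (node l b) c]

/-- List of all trees related to `t` by a single move (in either direction). -/
def nbrs : PBT → List PBT
  | leaf => []
  | node l r =>
    rootUp l r ++
    rootDown l r ++
    (nbrs l).map (fun x => node x r) ++
    (nbrs r).map (fun x => node l x)

theorem move_deg {x y : PBT} (h : move x y) : deg x = deg y := by
  induction h with
  | rot a b c => simp [deg]; omega
  | left b _ ih => simp [deg]; omega
  | right a _ ih => simp [deg]; omega

theorem move_ne {x y : PBT} (h : move x y) : x ≠ y := by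
  induction h with
  | rot a b c =>
    intro he
    have h1 : a = node a b := by injection he with h1 h2
    have : deg a = deg (node a b) := by rw [← h1]
    simp [deg] at this
    omega
  | left b _ ih =>
    intro he; injection he with h1 h2; exact ih h1
  | right a _ ih =>
    intro he; injection he with h1 h2; exact ih h2

theorem mem_nbrs {t p : PBT} : p ∈ nbrs t ↔ (move t p ∨ move p t) := by
  induction t generalizing p with
  | leaf =>
    simp only [nbrs, List.not_mem_nil, false_iff]
    rintro (h | h) <;> cases h
  | node l r ihl ihr =>
    constructor
    · intro hp
      simp only [nbrs, rootUp, rootDown, List.mem_append, List.mem_map] at hp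
      rcases hp with ((h1 | h2) | ⟨x, hx, rfl⟩) | ⟨x, hx, rfl⟩
      · match l, h1 with
        | node a b, h1 =>
          simp at h1
          subst h1
          exact Or.inr (move.rot a b r)
      · match r, h2 with
        | node b c, h2 =>
          simp at h2
          subst h2
          exact Or.inl (move.rot l b c)
      · rcases (ihl).1 hx with h | h
        · exact Or.inl (move.left r h)
        · exact Or.inr (move.left r h)
      · rcases (ihr).1 hx with h | h
        · exact Or.inl (move.right l h)
        · exact Or.inr (move.right l h)
    · intro hp
      simp only [nbrs, rootUp, rootDown, List.mem_append, List.mem_map]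
      rcases hp with h | h
      · cases h with
        | rot a b c => exact Or.inl (Or.inl (Or.inr (by simp)))
        | left b h => exact Or.inl (Or.inr ⟨_, ihl.2 (Or.inl h), rfl⟩)
        | right a h => exact Or.inr ⟨_, ihr.2 (Or.inl h), rfl⟩
      · cases h with
        | rot a b c => exact Or.inl (Or.inl (Or.inl (by simp)))
        | left b h => exact Or.inl (Or.inr ⟨_, ihl.2 (Or.inr h), rfl⟩)
        | right a h => exact Or.inr ⟨_, ihr.2 (Or.inr h), rfl⟩

theorem deg_of_mem_nbrs {t p : PBT} (h : p ∈ nbrs t) : deg p = deg t := by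
  rcases mem_nbrs.1 h with h | h
  · exact (move_deg h).symm
  · exact move_deg h

theorem ne_of_mem_nbrs {t p : PBT} (h : p ∈ nbrs t) : p ≠ t := by
  rcases mem_nbrs.1 h with h | h
  · exact (move_ne h).symm
  · exact move_ne h

theorem nbrs_nodup : ∀ t : PBT, (nbrs t).Nodup
  | leaf => by simp [nbrs]
  | node l r => by
    have ihl := nbrs_nodup l
    have ihr := nbrs_nodup r
    simp only [nbrs]
    set P1 : List PBT := rootUp l r with hP1
    set P2 : List PBT := rootDown l r with hP2
    set L : List PBT := (nbrs l).map (fun x => node x r) with hL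
    set R : List PBT := (nbrs r).map (fun x => node l x) with hR
    have memP1 : ∀ p ∈ P1, ∃ u v, p = node u v ∧ deg u < deg l := by
      rw [hP1]
      match l with
      | leaf => intro p hp; simp [rootUp] at hp
      | node a b =>
        intro p hp
        simp only [rootUp, List.mem_singleton] at hp
        exact ⟨a, node b r, hp, by simp [deg]⟩
    have memP2 : ∀ p ∈ P2, ∃ u v, p = node u v ∧ deg l < deg u := by
      rw [hP2]
      match r with
      | leaf => intro p hp; simp [rootDown] at hp
      | node b c =>
        intro p hp
        simp only [rootDown, List.mem_singleton] at hp
        exact ⟨node l b, c, hp, by simp [deg]⟩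
    have memL : ∀ p ∈ L, ∃ u, p = node u r ∧ deg u = deg l ∧ u ≠ l := by
      intro p hp
      rw [hL] at hp
      simp only [List.mem_map] at hp
      obtain ⟨x, hx, rfl⟩ := hp
      exact ⟨x, rfl, deg_of_mem_nbrs hx, ne_of_mem_nbrs hx⟩
    have memR : ∀ p ∈ R, ∃ v, p = node l v := by
      intro p hp
      rw [hR] at hp
      simp only [List.mem_map] at hp
      obtain ⟨x, hx, rfl⟩ := hp
      exact ⟨x, rfl⟩
    have hP1n : P1.Nodup := by
      rw [hP1]; match l with | leaf => simp [rootUp] | node a b => simp [rootUp]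
    have hP2n : P2.Nodup := by
      rw [hP2]; match r with | leaf => simp [rootDown] | node b c => simp [rootDown]
    have hLn : L.Nodup := ihl.map (fun x y hxy => by injection hxy)
    have hRn : R.Nodup := ihr.map (fun x y hxy => by injection hxy)
    have d12 : P1.Disjoint P2 := by
      intro p h1 h2
      obtain ⟨u, v, rfl, hu⟩ := memP1 p h1
      obtain ⟨u', v', he, hu'⟩ := memP2 _ h2
      injection he with e1 e2
      subst e1
      omega
    have d12L : (P1 ++ P2).Disjoint L := by
      intro p h1 h2
      obtain ⟨u, rfl, hdu, _⟩ := memL p h2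
      rcases List.mem_append.1 h1 with h1 | h1
      · obtain ⟨u', v', he, hu'⟩ := memP1 _ h1
        injection he with e1 e2; subst e1; omega
      · obtain ⟨u', v', he, hu'⟩ := memP2 _ h1
        injection he with e1 e2; subst e1; omega
    have dR : (P1 ++ P2 ++ L).Disjoint R := by
      intro p h1 h2
      obtain ⟨v, rfl⟩ := memR p h2
      rcases List.mem_append.1 h1 with h1 | h1
      · rcases List.mem_append.1 h1 with h1 | h1
        · obtain ⟨u', v', he, hu'⟩ := memP1 _ h1
          injection he with e1 e2; subst e1; omega
        · obtain ⟨u', v', he, hu'⟩ := memP2 _ h1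
          injection he with e1 e2; subst e1; omega
      · obtain ⟨u, he, hdu, hne⟩ := memL _ h1
        injection he with e1 e2
        exact hne e1.symm
    show (P1 ++ P2 ++ L ++ R).Nodup
    exact ((hP1n.append hP2n d12).append hLn d12L).append hRn dR

theorem nbrs_length (t : PBT) : (nbrs t).length = deg t - 1 := by
  induction t with
  | leaf => simp [nbrs, deg]
  | node l r ihl ihr =>
    have hl : l = leaf ∨ ∃ a b, l = node a b := by
      cases l with
      | leaf => exact Or.inl rfl
      | node a b => exact Or.inr ⟨a, b, rfl⟩
    have hr : r = leaf ∨ ∃ a b, r = node a b := by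
      cases r with
      | leaf => exact Or.inl rfl
      | node a b => exact Or.inr ⟨a, b, rfl⟩
    rcases hl with rfl | ⟨a, b, rfl⟩ <;> rcases hr with rfl | ⟨a', b', rfl⟩ <;>
      simp [nbrs, rootUp, rootDown, deg, List.length_append] at * <;> omega

end PBT

/-- The Hasse diagram of the Tamari poset on trees of degree `n` is regular of
degree `n - 1`: each tree is involved in exactly `n - 1` covering relations
(elementary moves), as lower or upper element. -/
theorem stmt7 (n : ℕ) (t : PBT) (h : t.deg = n) :
    Nat.card {p : PBT // PBT.move t p ∨ PBT.move p t} = n - 1 := by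
  subst h
  have e : {p : PBT // PBT.move t p ∨ PBT.move p t} ≃ {p : PBT // p ∈ (PBT.nbrs t).toFinset} :=
    Equiv.subtypeEquivRight (by
      intro p
      rw [List.mem_toFinset, PBT.mem_nbrs])
  rw [Nat.card_congr e, Nat.card_eq_fintype_card, Fintype.card_coe,
    List.toFinset_card_of_nodup (PBT.nbrs_nodup t), PBT.nbrs_length]
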